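/- Let p be a prime, let G and H be finite-dimensional vector spaces over 𝔽_p, and let A ⊆ G × H be a transverse set. Let U ≤ G and V′ ≤ H be subspaces, let d be a nonnegative integer, and let β : G × H → 𝔽_p^d be a bilinear map. Suppose X ⊆ U is a subset with |X| ≥ (1 − p^{−d}/3)|U| such that for every x ∈ X one has {y ∈ V′ : β(x,y) = 0} ⊆ A_{x·}. Then {(x,y) ∈ U × V′ : β(x,y) = 0} ⊆ A. -/
import Mathlib

/-- The final step of the proof of Theorem 4 of the paper: if almost all
`x ∈ U` satisfy `{y ∈ V' : β(x,y) = 0} ⊆ A_{x·}`, then the whole bilinear variety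
`{(x,y) ∈ U × V' : β(x,y) = 0}` is contained in the transverse set `A`. -/
theorem bilinear_variety_in_transverse
    (p : ℕ) [Fact p.Prime]
    (G H : Type) [AddCommGroup G] [AddCommGroup H]
    [Module (ZMod p) G] [Module (ZMod p) H]
    [FiniteDimensional (ZMod p) G] [FiniteDimensional (ZMod p) H]
    [Finite G] [Finite H]
    (A : Set (G × H))
    (hrow : ∀ x : G, ∃ S : Submodule (ZMod p) H, {y : H | (x, y) ∈ A} = ↑S)
    (hcol : ∀ y : H, ∃ S : Submodule (ZMod p) G, {x : G | (x, y) ∈ A} = ↑S)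
    (U : Submodule (ZMod p) G) (V' : Submodule (ZMod p) H)
    (d : ℕ) (β : G →ₗ[ZMod p] H →ₗ[ZMod p] (Fin d → ZMod p))
    (X : Set G) (hXU : X ⊆ (U : Set G))
    (hXcard : (Nat.card X : ℝ) ≥ (1 - (p : ℝ) ^ (-(d : ℤ)) / 3) * Nat.card U)
    (hX : ∀ x ∈ X, {y : H | y ∈ V' ∧ β x y = 0} ⊆ {y : H | (x, y) ∈ A}) :
    {z : G × H | z.1 ∈ U ∧ z.2 ∈ V' ∧ β z.1 z.2 = 0} ⊆ A := by
  have hp : (0 : ℝ) < p := by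
    exact_mod_cast (Fact.out : p.Prime).pos
  rintro ⟨x₀, y⟩ ⟨hx₀U, hyV, hβ0⟩
  obtain ⟨Sy, hSy⟩ := hcol y
  suffices hmem : x₀ ∈ Sy by
    show x₀ ∈ {x : G | (x, y) ∈ A}
    rw [hSy]; exact hmem
  -- the "column fiber" W
  set Wm : Submodule (ZMod p) G := U ⊓ LinearMap.ker (β.flip y) with hWm
  have hWmem : ∀ x : G, x ∈ Wm ↔ x ∈ U ∧ β x y = 0 := by
    intro x
    simp [hWm, Submodule.mem_inf, LinearMap.mem_ker]
  set Ws : Set G := (Wm : Set G) with hWsdef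
  have hx₀W : x₀ ∈ Ws := (hWmem x₀).2 ⟨hx₀U, hβ0⟩
  -- cardinality of W: |U| ≤ p^d * |W|
  have hcardW : Nat.card U ≤ p ^ d * Nat.card Ws := by
    set f : U →ₗ[ZMod p] (Fin d → ZMod p) := (β.flip y).comp U.subtype with hf
    have hker : Nat.card (LinearMap.ker f) = Nat.card Ws := by
      refine Nat.card_congr ⟨fun a => ⟨a.1.1, (hWmem a.1.1).2 ⟨a.1.2, a.2⟩⟩,
        fun b => ⟨⟨b.1, ((hWmem b.1).1 b.2).1⟩, ?_⟩, fun a => rfl, fun b => rfl⟩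
      have := ((hWmem b.1).1 b.2).2
      simpa [hf, LinearMap.mem_ker] using this
    have hquot : Nat.card (U ⧸ LinearMap.ker f) ≤ p ^ d := by
      have h1 : Nat.card (U ⧸ LinearMap.ker f) = Nat.card (LinearMap.range f) :=
        Nat.card_congr f.quotKerEquivRange.toEquiv
      have h2 : Nat.card (LinearMap.range f) ≤ Nat.card (Fin d → ZMod p) :=
        Nat.card_le_card_of_injective _ Subtype.val_injective
      have h3 : Nat.card (Fin d → ZMod p) = p ^ d := by
        simp [Nat.card_pi, Nat.card_zmod]
      omega
    calc Nat.card U = Nat.card (LinearMap.ker f) * Nat.card (U ⧸ LinearMap.ker f) :=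
          Submodule.card_eq_card_quotient_mul_card _
      _ ≤ Nat.card Ws * p ^ d := by rw [hker]; exact Nat.mul_le_mul_left _ hquot
      _ = p ^ d * Nat.card Ws := by ring
  -- pass to real numbers
  set nU : ℝ := (Nat.card U : ℝ) with hnU
  set nW : ℝ := (Nat.card Ws : ℝ) with hnW
  have hWU : Ws ⊆ (U : Set G) := fun x hx => ((hWmem x).1 hx).1
  have hcardWR : nU ≤ (p : ℝ) ^ d * nW := by
    have := (Nat.cast_le (α := ℝ)).2 hcardW
    push_cast at this
    exact this
  have hWpos : (0 : ℝ) < nW := by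
    have : 0 < Nat.card Ws := Nat.card_pos_iff.2 ⟨⟨x₀, hx₀W⟩, Set.toFinite Ws⟩
    exact Nat.cast_pos.2 this
  -- |U \ X| ≤ nW / 3
  have hdiff : (Nat.card ((U : Set G) \ X : Set G) : ℝ) ≤ nW / 3 := by
    have h1 : Nat.card ((U : Set G) \ X : Set G) + Nat.card X = Nat.card U := by
      rw [Nat.card_coe_set_eq, Nat.card_coe_set_eq,
        Set.ncard_diff_add_ncard_of_subset hXU]
      exact (Nat.card_coe_set_eq _).symm
    have h2 : (Nat.card ((U : Set G) \ X : Set G) : ℝ) = nU - Nat.card X := by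
      rw [hnU, ← h1]; push_cast; ring
    rw [h2]
    have h3 : nU - (Nat.card X : ℝ) ≤ (p : ℝ) ^ (-(d : ℤ)) / 3 * nU := by
      nlinarith [hXcard]
    have h4 : (p : ℝ) ^ (-(d : ℤ)) * nU ≤ nW := by
      rw [zpow_neg, zpow_natCast]
      rw [inv_mul_le_iff₀ (by positivity)]
      linarith [hcardWR]
    linarith
  -- S = X ∩ Ws has more than half of Ws
  set S : Set G := X ∩ Ws with hS
  have hScard : (Nat.card S : ℝ) ≥ 2 / 3 * nW := by
    have hsub : Ws ⊆ S ∪ ((U : Set G) \ X) := by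
      intro x hx
      by_cases hxX : x ∈ X
      · exact Or.inl ⟨hxX, hx⟩
      · exact Or.inr ⟨hWU hx, hxX⟩
    have h1 : Nat.card Ws ≤ Nat.card S + Nat.card ((U : Set G) \ X : Set G) := by
      rw [Nat.card_coe_set_eq, Nat.card_coe_set_eq, Nat.card_coe_set_eq]
      exact le_trans (Set.ncard_le_ncard hsub (Set.toFinite _)) (Set.ncard_union_le _ _)
    have h1' : nW ≤ (Nat.card S : ℝ) + Nat.card ((U : Set G) \ X : Set G) := by
      have := (Nat.cast_le (α := ℝ)).2 h1
      push_cast at this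
      exact this
    linarith
  -- pigeonhole: S and x₀ - S intersect
  set T : Set G := (fun s => x₀ - s) '' S with hT
  have hTcard : Nat.card T = Nat.card S := by
    rw [Nat.card_coe_set_eq, Nat.card_coe_set_eq]
    exact Set.ncard_image_of_injective _ (fun a b h => sub_right_injective h)
  have hSW : S ⊆ Ws := Set.inter_subset_right
  have hTW : T ⊆ Ws := by
    rintro _ ⟨s, hs, rfl⟩
    have hsW : s ∈ Wm := hSW hs
    exact Submodule.sub_mem _ ((hWmem x₀).2 ⟨hx₀U, hβ0⟩) hsW
  have hinter : (S ∩ T).Nonempty := by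
    by_contra hdisj
    rw [Set.not_nonempty_iff_eq_empty] at hdisj
    have h1 : Nat.card (S ∪ T : Set G) = Nat.card S + Nat.card T := by
      rw [Nat.card_coe_set_eq, Nat.card_coe_set_eq, Nat.card_coe_set_eq]
      exact Set.ncard_union_eq (Set.disjoint_iff_inter_eq_empty.2 hdisj)
        (Set.toFinite _) (Set.toFinite _)
    have h2 : Nat.card (S ∪ T : Set G) ≤ Nat.card Ws := by
      rw [Nat.card_coe_set_eq, Nat.card_coe_set_eq]
      exact Set.ncard_le_ncard (Set.union_subset hSW hTW) (Set.toFinite _)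
    have h3 : (Nat.card S : ℝ) + Nat.card T ≤ nW := by
      have h2' : Nat.card S + Nat.card T ≤ Nat.card Ws := h1 ▸ h2
      have := (Nat.cast_le (α := ℝ)).2 h2'
      push_cast at this
      exact this
    rw [hTcard] at h3
    linarith
  obtain ⟨x₁, hx₁S, x₂, hx₂S, hx₁eq⟩ := hinter
  -- x₁, x₂ ∈ Sy, and x₀ = x₁ + x₂
  have hmemSy : ∀ x ∈ S, x ∈ Sy := by
    intro x hx
    have hxA : (x, y) ∈ A := hX x hx.1 ⟨hyV, ((hWmem x).1 hx.2).2⟩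
    have : x ∈ {x : G | (x, y) ∈ A} := hxA
    rwa [hSy] at this
  have h1 : x₁ ∈ Sy := hmemSy x₁ hx₁S
  have h2 : x₂ ∈ Sy := hmemSy x₂ hx₂S
  have : x₀ = x₁ + x₂ := by rw [← hx₁eq]; simp
  rw [this]
  exact Submodule.add_mem _ h1 h2
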